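/- Let f : ℂ → ℂ be continuous on the closed half-plane {z : Re z ≥ 0} and holomorphic on the open half-plane {z : Re z > 0}, and suppose there exist constants C > 0 and c < 3π with |f(z)| ≤ C·e^{c|z|} for all z with Re z ≥ 0. Let 0 < a < b < 1 and suppose f(n) = f(n+a) = f(n+b) = 0 for every natural number n ≥ 0. Then f vanishes identically on {z : Re z ≥ 0}. -/

import Mathlib

open Complex Set Filter Asymptotics Bornology Topology

noncomputable section

namespace CarlsonAux

lemma growth_helper {S : Set ℂ} (G : ℂ → ℂ) (A ν : ℝ) (hA : 0 ≤ A)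
    (h : ∀ z ∈ S, ‖G z‖ ≤ A * Real.exp (ν * ‖z‖)) :
    ∃ c < (2:ℝ), ∃ B, G =O[cobounded ℂ ⊓ 𝓟 S] fun z => Real.exp (B * ‖z‖ ^ c) := by
  refine ⟨1, one_lt_two, ν, IsBigO.of_bound A ?_⟩
  have h' : ∀ᶠ z in 𝓟 S, ‖G z‖ ≤ A * ‖Real.exp (ν * ‖z‖ ^ (1:ℝ))‖ := by
    rw [eventually_principal]
    intro z hz
    have := h z hz
    rw [Real.norm_eq_abs, Real.abs_exp, Real.rpow_one]
    exact this
  exact h'.filter_mono inf_le_right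

/-- vertical decay from boundary decay, upper+lower quadrants -/
lemma lemA (G : ℂ → ℂ) (hd : DifferentiableOn ℂ G {z : ℂ | (-1:ℝ) < z.re})
    (B C₂ μ : ℝ) (hμ : 0 < μ) (hB0 : 0 ≤ B) (hC0 : 0 ≤ C₂)
    (hb : ∀ z : ℂ, 0 ≤ z.re → ‖G z‖ ≤ B)
    (him : ∀ y : ℝ, ‖G (y * I)‖ ≤ C₂ * Real.exp (-(μ * |y|))) :
    ∀ z : ℂ, 0 ≤ z.re → ‖G z‖ ≤ max B C₂ * Real.exp (-(μ * |z.im|)) := by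
  have hV : IsOpen {z : ℂ | (-1:ℝ) < z.re} := isOpen_lt continuous_const Complex.continuous_re
  have hsub : ∀ {z : ℂ}, 0 ≤ z.re → z ∈ {z : ℂ | (-1:ℝ) < z.re} := fun hz => by
    simp only [mem_setOf_eq]; linarith
  -- upper quadrant
  intro z hz
  rcases le_total 0 z.im with him0 | him0
  · -- use quadrant_I with multiplier exp(-(μ I z))
    set Φ : ℂ → ℂ := fun w => G w * Complex.exp (-((μ:ℂ) * I * w)) with hΦ
    have habs : ∀ w : ℂ, ‖Φ w‖ = ‖G w‖ * Real.exp (μ * w.im) := by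
      intro w
      rw [hΦ]
      simp only [norm_mul, Complex.norm_exp]
      congr 2
      simp [Complex.mul_re]
    have key : ‖Φ z‖ ≤ max B C₂ := by
      apply PhragmenLindelof.quadrant_I (f := Φ) (z := z)
      · constructor
        · apply DifferentiableOn.mul
          · refine hd.mono fun w hw => ?_
            rw [mem_reProdIm] at hw
            have : (0:ℝ) < w.re := hw.1
            simp only [mem_setOf_eq]; linarith
          · exact (Complex.differentiable_exp.comp (by fun_prop)).differentiableOn
        · apply ContinuousOn.mul
          · refine (hd.continuousOn.mono ?_)
            rw [closure_reProdIm, closure_Ioi]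
            intro w hw
            rw [mem_reProdIm] at hw
            have : (0:ℝ) ≤ w.re := hw.1
            simp only [mem_setOf_eq]; linarith
          · exact (Complex.continuous_exp.comp (by fun_prop)).continuousOn
      · apply growth_helper _ (max B C₂) μ (le_max_of_le_left hB0)
        intro w hw
        rw [mem_reProdIm] at hw
        rw [habs]
        have h1 : ‖G w‖ ≤ B := hb w (le_of_lt hw.1)
        have h2 : Real.exp (μ * w.im) ≤ Real.exp (μ * ‖w‖) := by
          apply Real.exp_le_exp.2
          have := Complex.abs_im_le_norm w
          have : w.im ≤ ‖w‖ := (le_abs_self _).trans this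
          nlinarith
        calc ‖G w‖ * Real.exp (μ * w.im)
            ≤ B * Real.exp (μ * ‖w‖) := by
              apply mul_le_mul h1 h2 (Real.exp_pos _).le hB0
          _ ≤ max B C₂ * Real.exp (μ * ‖w‖) := by
              apply mul_le_mul_of_nonneg_right (le_max_left _ _) (Real.exp_pos _).le
      · intro x hx
        rw [habs]
        simp only [Complex.ofReal_im]
        rw [mul_zero, Real.exp_zero, mul_one]
        exact (hb x (by simpa using hx)).trans (le_max_left _ _)
      · intro x hx
        rw [habs]
        have : ((x:ℂ) * I).im = x := by simp
        rw [this]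
        have := him x
        calc ‖G (x * I)‖ * Real.exp (μ * x)
            ≤ (C₂ * Real.exp (-(μ * |x|))) * Real.exp (μ * x) := by
              apply mul_le_mul_of_nonneg_right this (Real.exp_pos _).le
          _ = C₂ * Real.exp (-(μ * |x|) + μ * x) := by rw [mul_assoc, Real.exp_add]
          _ ≤ C₂ := by
              rw [_root_.abs_of_nonneg hx]
              have h0 : -(μ * x) + μ * x = 0 := by ring
              rw [h0, Real.exp_zero, mul_one]
          _ ≤ max B C₂ := le_max_right _ _
      · exact hz
      · exact him0
    have hkey : ‖G z‖ * Real.exp (μ * z.im) ≤ max B C₂ := by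
      rw [← habs]; exact key
    calc ‖G z‖
        = ‖G z‖ * Real.exp (μ * z.im) * Real.exp (-(μ * z.im)) := by
          rw [mul_assoc, ← Real.exp_add]; simp
      _ ≤ max B C₂ * Real.exp (-(μ * z.im)) :=
          mul_le_mul_of_nonneg_right hkey (Real.exp_pos _).le
      _ = max B C₂ * Real.exp (-(μ * |z.im|)) := by
          rw [_root_.abs_of_nonneg him0]
  · -- lower quadrant, multiplier exp(μ I z)
    set Φ : ℂ → ℂ := fun w => G w * Complex.exp ((μ:ℂ) * I * w) with hΦ
    have habs : ∀ w : ℂ, ‖Φ w‖ = ‖G w‖ * Real.exp (-(μ * w.im)) := by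
      intro w
      rw [hΦ]
      simp only [norm_mul, Complex.norm_exp]
      congr 2
      simp [Complex.mul_re]
    have key : ‖Φ z‖ ≤ max B C₂ := by
      apply PhragmenLindelof.quadrant_IV (f := Φ) (z := z)
      · constructor
        · apply DifferentiableOn.mul
          · refine hd.mono fun w hw => ?_
            rw [mem_reProdIm] at hw
            have : (0:ℝ) < w.re := hw.1
            simp only [mem_setOf_eq]; linarith
          · exact (Complex.differentiable_exp.comp (by fun_prop)).differentiableOn
        · apply ContinuousOn.mul
          · refine (hd.continuousOn.mono ?_)
            rw [closure_reProdIm, closure_Ioi, closure_Iio]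
            intro w hw
            rw [mem_reProdIm] at hw
            have : (0:ℝ) ≤ w.re := hw.1
            simp only [mem_setOf_eq]; linarith
          · exact (Complex.continuous_exp.comp (by fun_prop)).continuousOn
      · apply growth_helper _ (max B C₂) μ (le_max_of_le_left hB0)
        intro w hw
        rw [mem_reProdIm] at hw
        rw [habs]
        have h1 : ‖G w‖ ≤ B := hb w (le_of_lt hw.1)
        have h2 : Real.exp (-(μ * w.im)) ≤ Real.exp (μ * ‖w‖) := by
          apply Real.exp_le_exp.2
          have h3 := Complex.abs_im_le_norm w
          have : -w.im ≤ ‖w‖ := (neg_le_abs _).trans h3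
          nlinarith
        calc ‖G w‖ * Real.exp (-(μ * w.im))
            ≤ B * Real.exp (μ * ‖w‖) := by
              apply mul_le_mul h1 h2 (Real.exp_pos _).le hB0
          _ ≤ max B C₂ * Real.exp (μ * ‖w‖) := by
              apply mul_le_mul_of_nonneg_right (le_max_left _ _) (Real.exp_pos _).le
      · intro x hx
        rw [habs]
        simp only [Complex.ofReal_im]
        rw [mul_zero, neg_zero, Real.exp_zero, mul_one]
        exact (hb x (by simpa using hx)).trans (le_max_left _ _)
      · intro x hx
        rw [habs]
        have : ((x:ℂ) * I).im = x := by simp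
        rw [this]
        have := him x
        calc ‖G (x * I)‖ * Real.exp (-(μ * x))
            ≤ (C₂ * Real.exp (-(μ * |x|))) * Real.exp (-(μ * x)) := by
              apply mul_le_mul_of_nonneg_right this (Real.exp_pos _).le
          _ = C₂ * Real.exp (-(μ * |x|) + -(μ * x)) := by rw [mul_assoc, Real.exp_add]
          _ ≤ C₂ := by
              rw [_root_.abs_of_nonpos hx]
              have h0 : -(μ * -x) + -(μ * x) = 0 := by ring
              rw [h0, Real.exp_zero, mul_one]
          _ ≤ max B C₂ := le_max_right _ _
      · exact hz
      · exact him0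
    have hkey : ‖G z‖ * Real.exp (-(μ * z.im)) ≤ max B C₂ := by
      rw [← habs]; exact key
    calc ‖G z‖
        = ‖G z‖ * Real.exp (-(μ * z.im)) * Real.exp (μ * z.im) := by
          rw [mul_assoc, ← Real.exp_add]; simp
      _ ≤ max B C₂ * Real.exp (μ * z.im) :=
          mul_le_mul_of_nonneg_right hkey (Real.exp_pos _).le
      _ = max B C₂ * Real.exp (-(μ * |z.im|)) := by
          congr 1
          rw [_root_.abs_of_nonpos him0]
          ring



/-- horizontal decay from vertical decay, via rotated quadrant -/
lemma lemB (G : ℂ → ℂ) (hd : DifferentiableOn ℂ G {z : ℂ | (-1:ℝ) < z.re})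
    (B μ : ℝ) (hμ : 0 < μ) (hB0 : 0 ≤ B)
    (hb : ∀ z : ℂ, 0 ≤ z.re → ‖G z‖ ≤ B * Real.exp (-(μ * |z.im|))) :
    ∀ z : ℂ, 0 ≤ z.re → ‖G z‖ ≤ B * Real.exp (-(μ/2 * z.re)) := by
  have hb' : ∀ z : ℂ, 0 ≤ z.re → ‖G z‖ ≤ B := by
    intro z hz
    refine (hb z hz).trans ?_
    have h1 : Real.exp (-(μ * |z.im|)) ≤ 1 := by
      rw [Real.exp_le_one_iff]
      have : 0 ≤ μ * |z.im| := by positivity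
      linarith
    nlinarith [Real.exp_pos (-(μ * |z.im|))]
  set r2 : ℝ := Real.sqrt 2 with hr2def
  have hr2pos : 0 < r2 := Real.sqrt_pos.2 (by norm_num)
  have hr2sq : r2 * r2 = 2 := Real.mul_self_sqrt (by norm_num)
  have hr2le : r2 ≤ 2 := by nlinarith
  have h1r2 : 1 ≤ r2 := by nlinarith
  set ω : ℂ := (↑(r2⁻¹) : ℂ) * (1 - I) with hω
  have hωre : ∀ w : ℂ, (ω * w).re = (w.re + w.im) / r2 := by
    intro w
    rw [hω]
    simp [Complex.mul_re, Complex.mul_im, Complex.sub_re, Complex.sub_im, Complex.one_re,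
      Complex.one_im, Complex.I_re, Complex.I_im, div_eq_inv_mul]
    field_simp
    all_goals ring
  have hωim : ∀ w : ℂ, (ω * w).im = (w.im - w.re) / r2 := by
    intro w
    rw [hω]
    simp [Complex.mul_re, Complex.mul_im, Complex.sub_re, Complex.sub_im, Complex.one_re,
      Complex.one_im, Complex.I_re, Complex.I_im, div_eq_inv_mul]
    field_simp
    all_goals ring
  have hωabs : ‖ω‖ = 1 := by
    rw [hω, norm_mul]
    have h1 : ‖((r2⁻¹ : ℝ) : ℂ)‖ = r2⁻¹ := by
      rw [Complex.norm_real, Real.norm_eq_abs, abs_of_pos (by positivity)]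
    have h2 : ‖1 - I‖ = r2 := by
      rw [Complex.norm_def, Complex.normSq_sub, hr2def]
      · congr 1
        simp [Complex.normSq_apply]
        norm_num
    rw [h1, h2, inv_mul_cancel₀ (ne_of_gt hr2pos)]
  intro z hz
  rcases le_or_gt z.re |z.im| with hcase | hcase
  · -- outside sector: |im| ≥ re
    refine (hb z hz).trans ?_
    apply mul_le_mul_of_nonneg_left _ hB0
    apply Real.exp_le_exp.2
    have : μ/2 * z.re ≤ μ * |z.im| := by nlinarith [abs_nonneg z.im]
    linarith
  · -- inside sector: |im| < re
    set σ : ℝ := μ/2 with hσ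
    set H : ℂ → ℂ := fun u => G u * Complex.exp ((σ:ℂ) * u) with hH
    have hHabs : ∀ u : ℂ, ‖H u‖ = ‖G u‖ * Real.exp (σ * u.re) := by
      intro u
      rw [hH]
      simp only [norm_mul, Complex.norm_exp]
      congr 2
      simp [Complex.mul_re]
    set Φ : ℂ → ℂ := fun w => H (ω * w) with hΦ
    have key : ∀ w : ℂ, 0 ≤ w.re → 0 ≤ w.im → ‖Φ w‖ ≤ B := by
      intro w hwre hwim
      apply PhragmenLindelof.quadrant_I (f := Φ) (z := w)
      · have hH1 : DifferentiableOn ℂ H {z : ℂ | (-1:ℝ) < z.re} :=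
          hd.mul ((Complex.differentiable_exp.comp (by fun_prop)).differentiableOn)
        have hmap1 : Set.MapsTo (fun w : ℂ => ω * w) (Ioi 0 ×ℂ Ioi 0) {z : ℂ | (-1:ℝ) < z.re} := by
          intro u hu
          rw [mem_reProdIm] at hu
          have h1 : (0:ℝ) < u.re := hu.1
          have h2 : (0:ℝ) < u.im := hu.2
          simp only [mem_setOf_eq, hωre]
          have : 0 < (u.re + u.im) / r2 := by positivity
          linarith
        have hmap2 : Set.MapsTo (fun w : ℂ => ω * w) (closure (Ioi 0 ×ℂ Ioi 0)) {z : ℂ | (-1:ℝ) < z.re} := by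
          intro u hu
          rw [closure_reProdIm, closure_Ioi] at hu
          rw [mem_reProdIm] at hu
          have h1 : (0:ℝ) ≤ u.re := hu.1
          have h2 : (0:ℝ) ≤ u.im := hu.2
          simp only [mem_setOf_eq, hωre]
          have : 0 ≤ (u.re + u.im) / r2 := by positivity
          linarith
        constructor
        · exact hH1.comp ((differentiable_id.const_mul ω).differentiableOn) hmap1
        · exact hH1.continuousOn.comp ((continuous_const.mul continuous_id)).continuousOn hmap2
      · apply growth_helper _ B σ hB0
        intro u hu
        rw [mem_reProdIm] at hu
        have h1 : (0:ℝ) < u.re := hu.1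
        have h2 : (0:ℝ) < u.im := hu.2
        have hre0 : 0 ≤ (ω * u).re := by
          rw [hωre]; positivity
        rw [hΦ, hHabs]
        have hG : ‖G (ω * u)‖ ≤ B := hb' _ hre0
        have hexp : Real.exp (σ * (ω * u).re) ≤ Real.exp (σ * ‖u‖) := by
          apply Real.exp_le_exp.2
          apply mul_le_mul_of_nonneg_left _ (by positivity : (0:ℝ) ≤ σ)
          calc (ω * u).re ≤ |(ω * u).re| := le_abs_self _
            _ ≤ ‖ω * u‖ := Complex.abs_re_le_norm _
            _ = ‖u‖ := by rw [norm_mul, hωabs, one_mul]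
        exact mul_le_mul hG hexp (Real.exp_pos _).le hB0
      · -- real axis
        intro x hx
        rw [hΦ, hHabs]
        have hre : (ω * (x:ℂ)).re = x / r2 := by rw [hωre]; simp
        have him : (ω * (x:ℂ)).im = -(x / r2) := by rw [hωim]; simp; ring
        have hre0 : 0 ≤ (ω * (x:ℂ)).re := by rw [hre]; positivity
        have hG := hb _ hre0
        rw [him] at hG
        rw [hre]
        have habs' : |(-(x / r2))| = x / r2 := by
          rw [abs_neg, _root_.abs_of_nonneg (by positivity)]
        rw [habs'] at hG
        calc ‖G (ω * (x:ℂ))‖ * Real.exp (σ * (x / r2))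
            ≤ (B * Real.exp (-(μ * (x / r2)))) * Real.exp (σ * (x / r2)) :=
              mul_le_mul_of_nonneg_right hG (Real.exp_pos _).le
          _ = B * Real.exp ((σ - μ) * (x / r2)) := by
              rw [mul_assoc, ← Real.exp_add]; congr 2; ring
          _ ≤ B * 1 := by
              apply mul_le_mul_of_nonneg_left _ hB0
              rw [Real.exp_le_one_iff]
              have hσμ : σ - μ ≤ 0 := by rw [hσ]; linarith
              have : 0 ≤ x / r2 := by positivity
              nlinarith
          _ = B := mul_one B
      · -- imaginary axis
        intro x hx
        rw [hΦ, hHabs]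
        have hre : (ω * ((x:ℂ) * I)).re = x / r2 := by rw [hωre]; simp
        have him : (ω * ((x:ℂ) * I)).im = x / r2 := by rw [hωim]; simp
        have hre0 : 0 ≤ (ω * ((x:ℂ) * I)).re := by rw [hre]; positivity
        have hG := hb _ hre0
        rw [him] at hG
        rw [hre]
        have habs' : |x / r2| = x / r2 := _root_.abs_of_nonneg (by positivity)
        rw [habs'] at hG
        calc ‖G (ω * ((x:ℂ) * I))‖ * Real.exp (σ * (x / r2))
            ≤ (B * Real.exp (-(μ * (x / r2)))) * Real.exp (σ * (x / r2)) :=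
              mul_le_mul_of_nonneg_right hG (Real.exp_pos _).le
          _ = B * Real.exp ((σ - μ) * (x / r2)) := by
              rw [mul_assoc, ← Real.exp_add]; congr 2; ring
          _ ≤ B * 1 := by
              apply mul_le_mul_of_nonneg_left _ hB0
              rw [Real.exp_le_one_iff]
              have hσμ : σ - μ ≤ 0 := by rw [hσ]; linarith
              have : 0 ≤ x / r2 := by positivity
              nlinarith
          _ = B := mul_one B
      · exact hwre
      · exact hwim
    -- apply to w := conj ω * z
    set w : ℂ := ((↑(r2⁻¹) : ℂ) * (1 + I)) * z with hw
    have h2 : ((1:ℂ) - I) * (1 + I) = 2 := by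
      have h := Complex.I_mul_I
      calc ((1:ℂ) - I) * (1 + I) = 1 - I * I := by ring
        _ = 2 := by rw [h]; norm_num
    have h3 : ((↑(r2⁻¹):ℂ) * ↑(r2⁻¹)) * (((1:ℂ) - I) * (1 + I)) = 1 := by
      rw [h2, ← Complex.ofReal_mul]
      have hr : r2⁻¹ * r2⁻¹ = 1/2 := by
        field_simp
        linarith [hr2sq]
      rw [hr]
      norm_num
    have hωw : ω * w = z := by
      have hexp : ω * w = (((↑(r2⁻¹):ℂ) * ↑(r2⁻¹)) * (((1:ℂ) - I) * (1 + I))) * z := by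
        rw [hω, hw]; ring
      rw [hexp, h3, one_mul]
    have hwre : w.re = (z.re - z.im) / r2 := by
      rw [hw]
      simp [Complex.mul_re, Complex.mul_im, Complex.add_re, Complex.add_im, Complex.one_re,
        Complex.one_im, Complex.I_re, Complex.I_im, div_eq_inv_mul]
      field_simp
      all_goals ring
    have hwim : w.im = (z.re + z.im) / r2 := by
      rw [hw]
      simp [Complex.mul_re, Complex.mul_im, Complex.add_re, Complex.add_im, Complex.one_re,
        Complex.one_im, Complex.I_re, Complex.I_im, div_eq_inv_mul]
      field_simp
      all_goals ring
    have hwre0 : 0 ≤ w.re := by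
      rw [hwre]
      have : z.im ≤ |z.im| := le_abs_self _
      have : 0 ≤ z.re - z.im := by linarith
      positivity
    have hwim0 : 0 ≤ w.im := by
      rw [hwim]
      have : -z.im ≤ |z.im| := neg_le_abs _
      have : 0 ≤ z.re + z.im := by linarith
      positivity
    have hkey0 := key w hwre0 hwim0
    have hkey : ‖G z‖ * Real.exp (σ * z.re) ≤ B := by
      rw [← hHabs z, ← hωw]
      exact hkey0
    calc ‖G z‖
        = ‖G z‖ * Real.exp (σ * z.re) * Real.exp (-(σ * z.re)) := by
          rw [mul_assoc, ← Real.exp_add]; simp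
      _ ≤ B * Real.exp (-(σ * z.re)) := mul_le_mul_of_nonneg_right hkey (Real.exp_pos _).le
      _ = B * Real.exp (-(μ/2 * z.re)) := by rw [hσ]


lemma pl_iter (F : ℂ → ℂ) (hd : DifferentiableOn ℂ F {z : ℂ | (-1:ℝ) < z.re})
    (B₀ C₂ μ : ℝ) (hμ : 0 < μ) (hB0 : 0 ≤ B₀) (hC0 : 0 ≤ C₂)
    (hb : ∀ z : ℂ, 0 ≤ z.re → ‖F z‖ ≤ B₀)
    (him : ∀ y : ℝ, ‖F (y * I)‖ ≤ C₂ * Real.exp (-(μ * |y|))) :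
    ∀ n : ℕ, ∀ z : ℂ, 0 ≤ z.re →
      ‖F z‖ * Real.exp (n * (μ/2) * z.re) ≤ max B₀ C₂ := by
  set σ : ℝ := μ/2 with hσ
  set D : ℝ := max B₀ C₂ with hD
  have hD0 : 0 ≤ D := le_trans hB0 (le_max_left _ _)
  intro n
  induction n with
  | zero =>
    intro z hz
    simp only [Nat.cast_zero, zero_mul, Real.exp_zero, mul_one]
    exact (hb z hz).trans (le_max_left _ _)
  | succ n ih =>
    set G : ℂ → ℂ := fun z => F z * Complex.exp ((((n:ℝ) * σ : ℝ) : ℂ) * z) with hG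
    have hGabs : ∀ z : ℂ, ‖G z‖ = ‖F z‖ * Real.exp ((n:ℝ) * σ * z.re) := by
      intro z
      rw [hG]
      simp only [norm_mul, Complex.norm_exp]
      congr 2
      simp [Complex.mul_re]
    have hGd : DifferentiableOn ℂ G {z : ℂ | (-1:ℝ) < z.re} :=
      hd.mul ((Complex.differentiable_exp.comp (by fun_prop)).differentiableOn)
    have hGb : ∀ z : ℂ, 0 ≤ z.re → ‖G z‖ ≤ D := by
      intro z hz
      rw [hGabs]
      exact ih z hz
    have hGim : ∀ y : ℝ, ‖G (y * I)‖ ≤ C₂ * Real.exp (-(μ * |y|)) := by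
      intro y
      rw [hGabs]
      have : ((y:ℂ) * I).re = 0 := by simp
      rw [this, mul_zero, Real.exp_zero, mul_one]
      exact him y
    have step1 := lemA G hGd D C₂ μ hμ hD0 hC0 hGb hGim
    have step1' : ∀ z : ℂ, 0 ≤ z.re → ‖G z‖ ≤ D * Real.exp (-(μ * |z.im|)) := by
      intro z hz
      have := step1 z hz
      rwa [max_eq_left (le_max_right B₀ C₂)] at this
    have step2 := lemB G hGd D μ hμ hD0 step1'
    intro z hz
    have h2 := step2 z hz
    rw [hGabs] at h2
    have h3 : ‖F z‖ * Real.exp ((n:ℝ) * σ * z.re) * Real.exp (σ * z.re)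
        ≤ D * Real.exp (-(σ * z.re)) * Real.exp (σ * z.re) := by
      have := mul_le_mul_of_nonneg_right h2 (Real.exp_pos (σ * z.re)).le
      rwa [hσ] at this ⊢
    have harg : ((n+1:ℕ):ℝ) * σ * z.re = (n:ℝ) * σ * z.re + σ * z.re := by push_cast; ring
    have hD' : D * Real.exp (-(σ * z.re)) * Real.exp (σ * z.re) = D := by
      rw [mul_assoc, ← Real.exp_add]; simp
    rw [harg, Real.exp_add, ← mul_assoc]
    exact le_of_le_of_eq h3 hD'

lemma final_zero (F : ℂ → ℂ) (hd : DifferentiableOn ℂ F {z : ℂ | (-1:ℝ) < z.re})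
    (B₀ C₂ μ : ℝ) (hμ : 0 < μ) (hB0 : 0 ≤ B₀) (hC0 : 0 ≤ C₂)
    (hb : ∀ z : ℂ, 0 ≤ z.re → ‖F z‖ ≤ B₀)
    (him : ∀ y : ℝ, ‖F (y * I)‖ ≤ C₂ * Real.exp (-(μ * |y|))) :
    Set.EqOn F 0 {z : ℂ | 0 ≤ z.re} := by
  set σ : ℝ := μ/2 with hσ
  have hσ0 : 0 < σ := by rw [hσ]; positivity
  set D : ℝ := max B₀ C₂ with hD
  have hiter := pl_iter F hd B₀ C₂ μ hμ hB0 hC0 hb him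
  apply PhragmenLindelof.eq_zero_on_right_half_plane_of_superexponential_decay
  · constructor
    · exact hd.mono fun z hz => by simp only [mem_setOf_eq] at *; linarith
    · refine hd.continuousOn.mono ?_
      rw [Complex.closure_setOf_lt_re]
      intro z hz
      simp only [mem_setOf_eq] at *
      linarith
  · apply growth_helper _ B₀ 0 hB0
    intro z hz
    rw [zero_mul, Real.exp_zero, mul_one]
    exact hb z (le_of_lt hz)
  · intro n
    obtain ⟨m, hm⟩ := exists_nat_gt ((n:ℝ) / σ)
    have hm' : (n:ℝ) < m * σ := by
      rw [div_lt_iff₀ hσ0] at hm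
      exact hm
    have hg : Filter.Tendsto (fun x : ℝ => D * Real.exp (((n:ℝ) - m * σ) * x)) atTop (𝓝 0) := by
      have hneg : (n:ℝ) - m * σ < 0 := by linarith
      have hlin : Filter.Tendsto (fun x : ℝ => ((n:ℝ) - m * σ) * x) atTop atBot :=
        Filter.Tendsto.neg_mul_atTop hneg tendsto_const_nhds tendsto_id
      have := (Real.tendsto_exp_atBot.comp hlin).const_mul D
      simpa using this
    apply squeeze_zero' ?_ ?_ hg
    · filter_upwards with x
      positivity
    · filter_upwards [Filter.eventually_ge_atTop (0:ℝ)] with x hx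
      have h1 : ‖F x‖ * Real.exp (m * σ * x) ≤ D := by
        have h0 := hiter m (x:ℂ) (by simpa using hx)
        rw [Complex.ofReal_re] at h0
        exact h0
      have h2 : ‖F x‖ ≤ D * Real.exp (-(m * σ * x)) := by
        calc ‖F x‖
            = ‖F x‖ * Real.exp (m * σ * x) * Real.exp (-(m * σ * x)) := by
              rw [mul_assoc, ← Real.exp_add]; simp
          _ ≤ D * Real.exp (-(m * σ * x)) := mul_le_mul_of_nonneg_right h1 (Real.exp_pos _).le
      calc Real.exp x ^ n * ‖F x‖
          ≤ Real.exp x ^ n * (D * Real.exp (-(m * σ * x))) := by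
            apply mul_le_mul_of_nonneg_left h2 (by positivity)
        _ = D * Real.exp (((n:ℝ) - m * σ) * x) := by
            rw [← Real.exp_nat_mul, mul_comm (Real.exp _)]
            rw [mul_assoc, ← Real.exp_add]
            congr 2
            ring
  · exact ⟨B₀, fun y => by exact hb _ (by simp)⟩


lemma sinpi_zero_iff (w : ℂ) : Complex.sin (↑Real.pi * w) = 0 ↔ ∃ k : ℤ, w = (k:ℂ) := by
  rw [Complex.sin_eq_zero_iff]
  have hπ : ((Real.pi : ℂ)) ≠ 0 := Complex.ofReal_ne_zero.2 Real.pi_ne_zero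
  constructor
  · rintro ⟨k, hk⟩
    refine ⟨k, ?_⟩
    rw [mul_comm ((k:ℂ)) ((Real.pi:ℂ))] at hk
    exact mul_left_cancel₀ hπ hk
  · rintro ⟨k, rfl⟩
    exact ⟨k, by ring⟩

lemma sin_re_eq (z : ℂ) : (Complex.sin z).re = Real.sin z.re * Real.cosh z.im := by
  rw [Complex.sin_eq]
  simp [← Complex.ofReal_sin, ← Complex.ofReal_cos, ← Complex.ofReal_cosh, ← Complex.ofReal_sinh]

lemma abs_sin_ge_re (w : ℂ) :
    |Real.sin (Real.pi * w.re)| ≤ ‖Complex.sin (↑Real.pi * w)‖ := by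
  have h1 : (↑Real.pi * w).re = Real.pi * w.re := by simp
  have h2 : |(Complex.sin (↑Real.pi * w)).re| ≤ ‖Complex.sin (↑Real.pi * w)‖ :=
    Complex.abs_re_le_norm _
  rw [sin_re_eq, h1] at h2
  refine le_trans ?_ h2
  rw [abs_mul]
  have h3 : 1 ≤ |Real.cosh (↑Real.pi * w).im| := by
    rw [_root_.abs_of_pos (Real.cosh_pos _)]
    exact Real.one_le_cosh _
  nlinarith [abs_nonneg (Real.sin (Real.pi * w.re))]

lemma abs_sin_lower {w : ℂ} (h : 1 ≤ |w.im|) :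
    (1 - Real.exp (-(2*Real.pi)))/2 * Real.exp (Real.pi * |w.im|)
      ≤ ‖Complex.sin (↑Real.pi * w)‖ := by
  set u : ℂ := ↑Real.pi * w with hu
  have him : u.im = Real.pi * w.im := by rw [hu]; simp
  have hsin : Complex.sin u = (Complex.exp (-u * Complex.I) - Complex.exp (u * Complex.I)) * Complex.I / 2 := rfl
  have habs : ‖Complex.sin u‖
      = ‖Complex.exp (-u * Complex.I) - Complex.exp (u * Complex.I)‖ / 2 := by
    rw [hsin]
    rw [norm_div, norm_mul, Complex.norm_I, mul_one]
    norm_num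
  have hre1 : (-u * Complex.I).re = u.im := by simp
  have hre2 : (u * Complex.I).re = -u.im := by simp
  have ha1 : ‖Complex.exp (-u * Complex.I)‖ = Real.exp (Real.pi * w.im) := by
    rw [Complex.norm_exp, hre1, him]
  have ha2 : ‖Complex.exp (u * Complex.I)‖ = Real.exp (-(Real.pi * w.im)) := by
    rw [Complex.norm_exp, hre2, him]
  have hK : Real.exp (-(2*Real.pi)) < 1 := by
    rw [Real.exp_lt_one_iff]
    have := Real.pi_pos
    linarith
  rcases le_or_gt 1 w.im with hcase | hcase
  · -- w.im ≥ 1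
    have habs' : |w.im| = w.im := _root_.abs_of_nonneg (by linarith)
    have key : ‖Complex.exp (-u * Complex.I)‖ - ‖Complex.exp (u * Complex.I)‖
        ≤ ‖Complex.exp (-u * Complex.I) - Complex.exp (u * Complex.I)‖ := norm_sub_norm_le _ _
    rw [ha1, ha2] at key
    have hsmall : Real.exp (-(Real.pi * w.im)) ≤ Real.exp (-(2*Real.pi)) * Real.exp (Real.pi * w.im) := by
      rw [← Real.exp_add]
      apply Real.exp_le_exp.2
      have := Real.pi_pos
      nlinarith
    rw [habs, habs']
    nlinarith [Real.exp_pos (Real.pi * w.im)]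
  · -- w.im ≤ -1
    have him' : w.im ≤ -1 := by
      rcases abs_cases w.im with ⟨h1, h2⟩ | ⟨h1, h2⟩
      · linarith
      · linarith
    have habs' : |w.im| = -w.im := _root_.abs_of_nonpos (by linarith)
    have key : ‖Complex.exp (u * Complex.I)‖ - ‖Complex.exp (-u * Complex.I)‖
        ≤ ‖Complex.exp (-u * Complex.I) - Complex.exp (u * Complex.I)‖ := by
      rw [norm_sub_rev]
      exact norm_sub_norm_le _ _
    rw [ha1, ha2] at key
    have hsmall : Real.exp (Real.pi * w.im) ≤ Real.exp (-(2*Real.pi)) * Real.exp (-(Real.pi * w.im)) := by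
      rw [← Real.exp_add]
      apply Real.exp_le_exp.2
      have := Real.pi_pos
      nlinarith
    rw [habs, habs']
    have hrw : Real.pi * -w.im = -(Real.pi * w.im) := by ring
    rw [hrw]
    nlinarith [Real.exp_pos (-(Real.pi * w.im))]

lemma cos_ne_zero_of_sin_eq_zero {u : ℂ} (h : Complex.sin u = 0) : Complex.cos u ≠ 0 := by
  intro hc
  have := Complex.sin_sq_add_cos_sq u
  rw [h, hc] at this
  simp at this

lemma hasDerivAt_sinpi (s : ℝ) (w : ℂ) :
    HasDerivAt (fun z : ℂ => Complex.sin (↑Real.pi * (z - ↑s)))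
      (↑Real.pi * Complex.cos (↑Real.pi * (w - ↑s))) w := by
  have h1 : HasDerivAt (fun z : ℂ => ↑Real.pi * (z - ↑s)) (↑Real.pi) w := by
    simpa using ((hasDerivAt_id w).sub_const (↑s : ℂ)).const_mul (↑Real.pi : ℂ)
  have h2 := (Complex.hasDerivAt_sin (↑Real.pi * (w - ↑s))).comp w h1
  rw [show (↑Real.pi * Complex.cos (↑Real.pi * (w - ↑s))) = Complex.cos (↑Real.pi * (w - ↑s)) * ↑Real.pi from mul_comm _ _]
  exact h2

lemma abs_sin_nat_add (m : ℕ) (t : ℝ) : |Real.sin (Real.pi * m + t)| = |Real.sin t| := by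
  rw [Real.sin_add]
  have h1 : Real.sin (Real.pi * m) = 0 := by
    rw [mul_comm]
    exact Real.sin_nat_mul_pi m
  have h2 : |Real.cos (Real.pi * m)| = 1 := by
    have h3 := Real.sin_sq_add_cos_sq (Real.pi * m)
    rw [h1] at h3
    have h4 : Real.cos (Real.pi * m) ^ 2 = 1 := by nlinarith
    have h5 : (Real.cos (Real.pi * m) - 1) * (Real.cos (Real.pi * m) + 1) = 0 := by nlinarith
    rcases mul_eq_zero.mp h5 with h | h
    · rw [sub_eq_zero] at h
      rw [h]
      norm_num
    · have h6 : Real.cos (Real.pi * m) = -1 := by linarith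
      rw [h6]
      norm_num
  rw [h1, zero_mul, zero_add, abs_mul, h2, one_mul]



def sfac (s : ℝ) (z : ℂ) : ℂ := Complex.sin (↑Real.pi * (z - (s:ℂ)))

def Pden (a b : ℝ) (z : ℂ) : ℂ := sfac 0 z * sfac a z * sfac b z

lemma sfac_zero_iff (s : ℝ) (z : ℂ) : sfac s z = 0 ↔ ∃ k : ℤ, z = (k:ℂ) + s := by
  rw [sfac, sinpi_zero_iff]
  constructor
  · rintro ⟨k, hk⟩
    exact ⟨k, by rw [← hk]; ring⟩
  · rintro ⟨k, rfl⟩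
    exact ⟨k, by ring⟩

lemma sfac_ne_of_im (s : ℝ) {z : ℂ} (h : z.im ≠ 0) : sfac s z ≠ 0 := by
  intro h0
  obtain ⟨k, rfl⟩ := (sfac_zero_iff s z).mp h0
  simp at h

lemma Pden_ne_of_im {a b : ℝ} {z : ℂ} (h : z.im ≠ 0) : Pden a b z ≠ 0 :=
  mul_ne_zero (mul_ne_zero (sfac_ne_of_im 0 h) (sfac_ne_of_im a h)) (sfac_ne_of_im b h)

lemma sfac_hasDerivAt (s : ℝ) (w : ℂ) :
    HasDerivAt (sfac s) (↑Real.pi * Complex.cos (↑Real.pi * (w - (s:ℂ)))) w :=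
  hasDerivAt_sinpi s w

lemma Pden_hasDerivAt (a b : ℝ) (w : ℂ) :
    HasDerivAt (Pden a b)
      ((↑Real.pi * Complex.cos (↑Real.pi * (w - ((0:ℝ):ℂ))) * sfac a w
          + sfac 0 w * (↑Real.pi * Complex.cos (↑Real.pi * (w - (a:ℂ))))) * sfac b w
        + sfac 0 w * sfac a w * (↑Real.pi * Complex.cos (↑Real.pi * (w - (b:ℂ))))) w := by
  exact ((sfac_hasDerivAt 0 w).mul (sfac_hasDerivAt a w)).mul (sfac_hasDerivAt b w)

lemma Pden_differentiable (a b : ℝ) : Differentiable ℂ (Pden a b) :=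
  fun w => (Pden_hasDerivAt a b w).differentiableAt

lemma resid {s t : ℝ} (h0 : 0 < t - s) (h1 : t - s < 1) {z : ℂ} :
    ¬(sfac s z = 0 ∧ sfac t z = 0) := by
  rintro ⟨hs, ht⟩
  rw [sfac_zero_iff] at hs ht
  obtain ⟨k, hk⟩ := hs
  obtain ⟨l, hl⟩ := ht
  have h2 : ((k - l : ℤ) : ℂ) = ((t - s : ℝ) : ℂ) := by
    rw [hk] at hl
    push_cast
    push_cast at hl
    linear_combination hl
  have h3 : ((k - l : ℤ) : ℝ) = t - s := by
    exact_mod_cast h2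
  rcases le_or_gt (k - l) 0 with h4 | h4
  · have : ((k - l : ℤ) : ℝ) ≤ 0 := by exact_mod_cast h4
    linarith
  · have h5 : (1 : ℤ) ≤ k - l := h4
    have : (1 : ℝ) ≤ ((k - l : ℤ) : ℝ) := by exact_mod_cast h5
    linarith

lemma cospi_ne {s : ℝ} {w : ℂ} (h : sfac s w = 0) :
    ↑Real.pi * Complex.cos (↑Real.pi * (w - (s:ℂ))) ≠ 0 := by
  apply mul_ne_zero (Complex.ofReal_ne_zero.2 Real.pi_ne_zero)
  exact cos_ne_zero_of_sin_eq_zero h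

lemma Pden_deriv_ne_zero {a b : ℝ} (ha : 0 < a) (hab : a < b) (hb : b < 1)
    {w : ℂ} (hw : Pden a b w = 0) : deriv (Pden a b) w ≠ 0 := by
  rw [(Pden_hasDerivAt a b w).deriv]
  have hab0 : ¬(sfac 0 w = 0 ∧ sfac a w = 0) := resid (by linarith) (by linarith)
  have hb0 : ¬(sfac 0 w = 0 ∧ sfac b w = 0) := resid (by linarith) (by linarith)
  have hab' : ¬(sfac a w = 0 ∧ sfac b w = 0) := resid (by linarith) (by linarith)
  rw [Pden] at hw
  rcases mul_eq_zero.mp hw with h01 | h2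
  · rcases mul_eq_zero.mp h01 with h0 | h1
    · -- sfac 0 w = 0
      have ha' : sfac a w ≠ 0 := fun h => hab0 ⟨h0, h⟩
      have hb' : sfac b w ≠ 0 := fun h => hb0 ⟨h0, h⟩
      rw [h0]
      simp only [zero_mul, mul_zero, add_zero, zero_add]
      exact mul_ne_zero (mul_ne_zero (cospi_ne h0) ha') hb'
    · -- sfac a w = 0
      have h0' : sfac 0 w ≠ 0 := fun h => hab0 ⟨h, h1⟩
      have hb' : sfac b w ≠ 0 := fun h => hab' ⟨h1, h⟩
      rw [h1]
      simp only [zero_mul, mul_zero, add_zero, zero_add]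
      exact mul_ne_zero (mul_ne_zero h0' (cospi_ne h1)) hb'
  · -- sfac b w = 0
    have h0' : sfac 0 w ≠ 0 := fun h => hb0 ⟨h, h2⟩
    have ha' : sfac a w ≠ 0 := fun h => hab' ⟨h, h2⟩
    rw [h2]
    simp only [zero_mul, mul_zero, add_zero, zero_add]
    exact mul_ne_zero (mul_ne_zero h0' ha') (cospi_ne h2)

/-- differentiability of the patched quotient -/
lemma Qdiff (f₁ : ℂ → ℂ) {a b : ℝ} (ha : 0 < a) (hab : a < b) (hb : b < 1)
    (hf₁d : DifferentiableOn ℂ f₁ {z : ℂ | (-1:ℝ) < z.re})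
    (hf₁zero : ∀ z ∈ {z : ℂ | (-1:ℝ) < z.re}, Pden a b z = 0 → f₁ z = 0) :
    DifferentiableOn ℂ
      (fun z => if Pden a b z = 0 then deriv f₁ z / deriv (Pden a b) z else f₁ z / Pden a b z)
      {z : ℂ | (-1:ℝ) < z.re} := by
  set V : Set ℂ := {z : ℂ | (-1:ℝ) < z.re} with hV
  have hVopen : IsOpen V := isOpen_lt continuous_const Complex.continuous_re
  set Q : ℂ → ℂ := fun z => if Pden a b z = 0 then deriv f₁ z / deriv (Pden a b) z
    else f₁ z / Pden a b z with hQ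
  intro w hwV
  have hwnh : V ∈ 𝓝 w := hVopen.mem_nhds hwV
  apply DifferentiableAt.differentiableWithinAt
  by_cases hPw : Pden a b w = 0
  · -- zero of the denominator : removable
    have hf₁w : f₁ w = 0 := hf₁zero w hwV hPw
    have hDne : deriv (Pden a b) w ≠ 0 := Pden_deriv_ne_zero ha hab hb hPw
    set g₁ : ℂ → ℂ := dslope f₁ w with hg₁
    set g₂ : ℂ → ℂ := dslope (Pden a b) w with hg₂
    have hg₁d : DifferentiableAt ℂ g₁ w := by
      have := (Complex.differentiableOn_dslope (f := f₁) (c := w) hwnh).mpr hf₁d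
      exact this.differentiableAt hwnh
    have hg₂d : DifferentiableAt ℂ g₂ w := by
      have h2 : DifferentiableOn ℂ (Pden a b) Set.univ := (Pden_differentiable a b).differentiableOn
      have := (Complex.differentiableOn_dslope (f := Pden a b) (c := w)
        (Filter.univ_mem)).mpr h2
      exact this.differentiableAt Filter.univ_mem
    have hg₂w : g₂ w ≠ 0 := by
      rw [hg₂, dslope_same]
      exact hDne
    have hg₂ne : ∀ᶠ z in 𝓝 w, g₂ z ≠ 0 := hg₂d.continuousAt.eventually_ne hg₂w
    have hev : Q =ᶠ[𝓝 w] fun z => g₁ z / g₂ z := by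
      filter_upwards [hg₂ne] with z hz
      by_cases hzw : z = w
      · subst hzw
        rw [hQ]
        simp only [if_pos hPw]
        rw [hg₁, hg₂, dslope_same, dslope_same]
      · have hsub : z - w ≠ 0 := sub_ne_zero.2 hzw
        have hPz : Pden a b z = (z - w) * g₂ z := by
          have h := sub_smul_dslope (Pden a b) w z
          rw [smul_eq_mul, hPw, sub_zero] at h
          rw [hg₂]
          exact h.symm
        have hf₁z : f₁ z = (z - w) * g₁ z := by
          have h := sub_smul_dslope f₁ w z
          rw [smul_eq_mul, hf₁w, sub_zero] at h
          rw [hg₁]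
          exact h.symm
        have hPzne : Pden a b z ≠ 0 := by
          rw [hPz]
          exact mul_ne_zero hsub hz
        rw [hQ]
        simp only [if_neg hPzne]
        rw [hPz, hf₁z]
        exact mul_div_mul_left _ _ hsub
    rw [hev.differentiableAt_iff]
    exact hg₁d.div hg₂d hg₂w
  · -- nonzero denominator
    have hPne : ∀ᶠ z in 𝓝 w, Pden a b z ≠ 0 :=
      (Pden_differentiable a b).continuous.continuousAt.eventually_ne hPw
    have hev : Q =ᶠ[𝓝 w] fun z => f₁ z / Pden a b z := by
      filter_upwards [hPne] with z hz
      rw [hQ]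
      simp only [if_neg hz]
    rw [hev.differentiableAt_iff]
    exact (hf₁d.differentiableAt hwnh).div ((Pden_differentiable a b) w) hPw


end CarlsonAux

open CarlsonAux Complex Set Filter

set_option maxHeartbeats 4000000 in
theorem carlson_type_uniqueness (f : ℂ → ℂ)
    (hcont : ContinuousOn f {z : ℂ | 0 ≤ z.re})
    (hdiff : DifferentiableOn ℂ f {z : ℂ | 0 < z.re})
    (C c : ℝ) (hC : 0 < C) (hc : c < 3 * Real.pi)
    (hgrowth : ∀ z : ℂ, 0 ≤ z.re → ‖f z‖ ≤ C * Real.exp (c * ‖z‖))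
    (a b : ℝ) (ha : 0 < a) (hab : a < b) (hb : b < 1)
    (hzero : ∀ n : ℕ, f (n : ℂ) = 0 ∧ f ((n : ℂ) + (a : ℂ)) = 0 ∧ f ((n : ℂ) + (b : ℂ)) = 0) :
    ∀ z : ℂ, 0 ≤ z.re → f z = 0 := by
  classical
  set V : Set ℂ := {z : ℂ | (-1:ℝ) < z.re} with hVdef
  have hVopen : IsOpen V := isOpen_lt continuous_const Complex.continuous_re
  have hπ := Real.pi_pos
  set c₁ : ℝ := max c 0 with hc₁def
  have hc₁0 : 0 ≤ c₁ := le_max_right _ _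
  have hc₁3 : c₁ < 3 * Real.pi := max_lt hc (by positivity)
  set μ : ℝ := 3 * Real.pi - c₁ with hμdef
  have hμ : 0 < μ := by rw [hμdef]; linarith
  -- the shifted function
  set f₁ : ℂ → ℂ := fun z => f (z + 1) with hf₁def
  have hf₁d : DifferentiableOn ℂ f₁ V := by
    have hmaps : Set.MapsTo (fun z : ℂ => z + 1) V {z : ℂ | 0 < z.re} := by
      intro z hz
      simp only [hVdef, mem_setOf_eq] at hz ⊢
      simp only [Complex.add_re, Complex.one_re]
      linarith
    exact hdiff.comp ((differentiable_id.add_const 1).differentiableOn) hmaps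
  set C' : ℝ := C * Real.exp (3 * c₁) with hC'def
  have hC'0 : 0 < C' := by positivity
  have hf₁b : ∀ z : ℂ, -1 ≤ z.re → ‖f₁ z‖ ≤ C' * Real.exp (c₁ * (z.re + |z.im|)) := by
    intro z hz
    have h1 : 0 ≤ (z+1).re := by
      simp only [Complex.add_re, Complex.one_re]; linarith
    have h2 := hgrowth (z+1) h1
    refine h2.trans ?_
    rw [hC'def, mul_assoc, ← Real.exp_add]
    apply mul_le_mul_of_nonneg_left _ hC.le
    apply Real.exp_le_exp.2
    have habs1 : ‖z+1‖ ≤ z.re + |z.im| + 3 := by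
      have h3 := Complex.norm_le_abs_re_add_abs_im (z+1)
      have h4 : |(z+1).re| ≤ z.re + 2 := by
        rw [Complex.add_re, Complex.one_re]
        rcases abs_cases (z.re + 1) with ⟨h5, _⟩ | ⟨h5, _⟩ <;> linarith
      have h5 : (z+1).im = z.im := by simp
      rw [h5] at h3
      linarith
    rcases le_or_gt c 0 with hcs | hcs
    · have hc₁z : c₁ = 0 := by rw [hc₁def]; exact max_eq_right hcs
      rw [hc₁z]
      have : c * ‖z+1‖ ≤ 0 :=
        mul_nonpos_iff.2 (Or.inr ⟨hcs, norm_nonneg _⟩)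
      linarith
    · have hc₁c : c₁ = c := by rw [hc₁def]; exact max_eq_left hcs.le
      rw [hc₁c]
      nlinarith [habs1]
  -- f₁ vanishes at all zeros of Pden in V
  have hf₁zero : ∀ z ∈ V, Pden a b z = 0 → f₁ z = 0 := by
    intro z hzV hPz
    rw [hVdef, mem_setOf_eq] at hzV
    rw [Pden] at hPz
    have main : ∀ (s : ℝ) (k : ℤ), z = (k:ℂ) + (s:ℂ) → s = 0 ∨ s = a ∨ s = b → f₁ z = 0 := by
      intro s k hk hs
      have hzre : z.re = (k:ℝ) + s := by rw [hk]; simp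
      have hs01 : 0 ≤ s ∧ s < 1 := by
        rcases hs with rfl | rfl | rfl
        · exact ⟨le_refl 0, by norm_num⟩
        · exact ⟨ha.le, by linarith⟩
        · exact ⟨by linarith, hb⟩
      have hk1 : 0 ≤ k + 1 := by
        have h1 : (-2:ℝ) < (k:ℝ) := by
          have := hzV
          rw [hzre] at this
          linarith [hs01.1, hs01.2]
        have h2 : (-2:ℤ) < k := by exact_mod_cast h1
        omega
      set n : ℕ := (k+1).toNat with hn
      have hcast : ((n:ℤ)) = k + 1 := Int.toNat_of_nonneg hk1
      have hcastC : ((n:ℂ)) = (k:ℂ) + 1 := by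
        have := congrArg (fun m : ℤ => (m:ℂ)) hcast
        push_cast at this
        exact this
      have hz1 : z + 1 = (n:ℂ) + (s:ℂ) := by
        rw [hk, hcastC]; ring
      rcases hs with rfl | rfl | rfl
      · have := (hzero n).1
        show f (z+1) = 0
        rw [hz1]
        simpa using this
      · have := (hzero n).2.1
        show f (z+1) = 0
        rw [hz1]
        exact this
      · have := (hzero n).2.2
        show f (z+1) = 0
        rw [hz1]
        exact this
    rcases mul_eq_zero.mp hPz with h01 | h2
    · rcases mul_eq_zero.mp h01 with h0 | h1
      · obtain ⟨k, hk⟩ := (sfac_zero_iff 0 z).mp h0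
        exact main 0 k hk (Or.inl rfl)
      · obtain ⟨k, hk⟩ := (sfac_zero_iff a z).mp h1
        exact main a k hk (Or.inr (Or.inl rfl))
    · obtain ⟨k, hk⟩ := (sfac_zero_iff b z).mp h2
      exact main b k hk (Or.inr (Or.inr rfl))
  -- the quotient
  set Q : ℂ → ℂ := fun z => if Pden a b z = 0 then deriv f₁ z / deriv (Pden a b) z
    else f₁ z / Pden a b z with hQdef
  have hQd : DifferentiableOn ℂ Q V := Qdiff f₁ ha hab hb hf₁d hf₁zero
  set F : ℂ → ℂ := fun z => Q z * Complex.exp (-(c₁:ℂ) * z) with hFdef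
  have hFd : DifferentiableOn ℂ F V :=
    hQd.mul ((Complex.differentiable_exp.comp (by fun_prop)).differentiableOn)
  have hFabs : ∀ z : ℂ, Pden a b z ≠ 0 →
      ‖F z‖ = ‖f₁ z‖ / ‖Pden a b z‖ * Real.exp (-(c₁ * z.re)) := by
    intro z hz
    show ‖Q z * Complex.exp (-(c₁:ℂ) * z)‖ = _
    rw [hQdef]
    simp only [if_neg hz]
    rw [norm_mul, norm_div, Complex.norm_exp]
    congr 2
    rw [neg_mul, Complex.neg_re, Complex.re_ofReal_mul]
  
  clear_value C'
  -- lower bound machinery for |Pden| when |Im| ≥ 1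
  set M : ℝ := 2 / (1 - Real.exp (-(2*Real.pi))) with hMdef
  have hexp2π : Real.exp (-(2*Real.pi)) < 1 := by
    rw [Real.exp_lt_one_iff]; linarith
  have hM0 : 0 < M := by
    rw [hMdef]; exact div_pos two_pos (by linarith)
  have hMne3 : M^3 ≠ 0 := by positivity
  clear_value M
  have hsfac_low : ∀ (s : ℝ) (z : ℂ), 1 ≤ |z.im| →
      Real.exp (Real.pi * |z.im|) / M ≤ ‖sfac s z‖ := by
    intro s z hz
    have him : (z - (s:ℂ)).im = z.im := by simp
    have h1 := abs_sin_lower (w := z - (s:ℂ)) (by rw [him]; exact hz)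
    rw [him] at h1
    have h2 : (1 - Real.exp (-(2*Real.pi)))/2 * Real.exp (Real.pi * |z.im|)
        = Real.exp (Real.pi * |z.im|) / M := by
      rw [hMdef]
      field_simp
    rw [h2] at h1
    exact h1
  have hPden_low : ∀ z : ℂ, 1 ≤ |z.im| →
      (Real.exp (Real.pi * |z.im|) / M)^3 ≤ ‖Pden a b z‖ := by
    intro z hz
    have h0 := hsfac_low 0 z hz
    have h1 := hsfac_low a z hz
    have h2 := hsfac_low b z hz
    have e0 : (0:ℝ) ≤ Real.exp (Real.pi * |z.im|) / M := by positivity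
    have : ‖Pden a b z‖
        = ‖sfac 0 z‖ * ‖sfac a z‖ * ‖sfac b z‖ := by
      rw [show Pden a b z = sfac 0 z * sfac a z * sfac b z from rfl, norm_mul, norm_mul]
    rw [this]
    calc (Real.exp (Real.pi * |z.im|) / M)^3
        = (Real.exp (Real.pi * |z.im|) / M) * (Real.exp (Real.pi * |z.im|) / M)
          * (Real.exp (Real.pi * |z.im|) / M) := by ring
      _ ≤ ‖sfac 0 z‖ * ‖sfac a z‖ * ‖sfac b z‖ :=
          mul_le_mul (mul_le_mul h0 h1 e0 (norm_nonneg _)) h2 e0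
            (mul_nonneg (norm_nonneg _) (norm_nonneg _))
  set K₁ : ℝ := C' * M^3 with hK₁def
  have hK₁0 : 0 < K₁ := by positivity
  clear_value K₁
  have hE3 : ∀ u : ℝ, (Real.exp u)^3 = Real.exp (3*u) := by
    intro u
    rw [← Real.exp_nat_mul]
    norm_num
  have hB1 : ∀ z : ℂ, -1 ≤ z.re → 1 ≤ |z.im| →
      ‖F z‖ ≤ K₁ * Real.exp (-(μ * |z.im|)) := by
    intro z hz him1
    have hzim : z.im ≠ 0 := by
      intro h; rw [h] at him1; simp at him1; linarith
    have hPne : Pden a b z ≠ 0 := Pden_ne_of_im hzim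
    have hPpos : 0 < ‖Pden a b z‖ := norm_pos_iff.2 hPne
    rw [hFabs z hPne, div_mul_eq_mul_div, div_le_iff₀ hPpos]
    set t : ℝ := |z.im| with ht
    have step1 : ‖f₁ z‖ * Real.exp (-(c₁ * z.re)) ≤ C' * Real.exp (c₁ * t) := by
      calc ‖f₁ z‖ * Real.exp (-(c₁ * z.re))
          ≤ (C' * Real.exp (c₁ * (z.re + t))) * Real.exp (-(c₁ * z.re)) :=
            mul_le_mul_of_nonneg_right (hf₁b z hz) (Real.exp_pos _).le
        _ = C' * Real.exp (c₁ * t) := by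
            rw [mul_assoc, ← Real.exp_add]
            congr 2
            ring
    have step2 : C' * Real.exp (c₁ * t) ≤ K₁ * Real.exp (-(μ * t)) * ‖Pden a b z‖ := by
      have harg : -(μ * t) + 3*(Real.pi*t) = c₁ * t := by rw [hμdef]; ring
      have h5 : K₁ * Real.exp (-(μ * t)) * ((Real.exp (Real.pi * t) / M)^3)
          = C' * Real.exp (c₁ * t) := by
        calc K₁ * Real.exp (-(μ * t)) * ((Real.exp (Real.pi * t) / M)^3)
            = C' * (Real.exp (-(μ*t)) * Real.exp (3*(Real.pi*t))) * (M^3 / M^3) := by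
              rw [hK₁def, div_pow, hE3 (Real.pi * t)]
              ring
          _ = C' * Real.exp (c₁ * t) := by
              rw [div_self hMne3, ← Real.exp_add, harg, mul_one]
      rw [← h5]
      exact mul_le_mul_of_nonneg_left (hPden_low z him1) (by positivity)
    exact step1.trans step2
  -- right edge bound
  set η : ℝ := min (Real.sin (Real.pi * (a/2))) (Real.sin (Real.pi * (b - a/2))) with hηdef
  have hη0 : 0 < η := by
    rw [hηdef]
    apply lt_min
    · apply Real.sin_pos_of_pos_of_lt_pi
      · positivity
      · have h1 : Real.pi * (a/2) < Real.pi * 1 :=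
          mul_lt_mul_of_pos_left (by linarith) hπ
        linarith
    · apply Real.sin_pos_of_pos_of_lt_pi
      · apply mul_pos hπ
        linarith
      · have h1 : Real.pi * (b - a/2) < Real.pi * 1 :=
          mul_lt_mul_of_pos_left (by linarith) hπ
        linarith
  have hedge : ∀ (m : ℕ) (z : ℂ), z.re = (m:ℝ) + a/2 →
      η^3 ≤ ‖Pden a b z‖ ∧ Pden a b z ≠ 0 := by
    intro m z hzre
    have key : ∀ s : ℝ, |Real.sin (Real.pi * (z.re - s))| ≤ ‖sfac s z‖ := by
      intro s
      have h := abs_sin_ge_re (z - (s:ℂ))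
      have hre : (z - (s:ℂ)).re = z.re - s := by simp
      rw [hre] at h
      exact h
    have h0 : η ≤ ‖sfac 0 z‖ := by
      refine le_trans ?_ (key 0)
      rw [hzre]
      have : Real.pi * ((m:ℝ) + a/2 - 0) = Real.pi * m + Real.pi * (a/2) := by ring
      rw [this, abs_sin_nat_add]
      rw [_root_.abs_of_nonneg (by
        apply Real.sin_nonneg_of_nonneg_of_le_pi
        · positivity
        · have h1 : Real.pi * (a/2) ≤ Real.pi * 1 :=
            mul_le_mul_of_nonneg_left (by linarith) hπ.le
          linarith)]
      exact min_le_left _ _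
    have h1 : η ≤ ‖sfac a z‖ := by
      refine le_trans ?_ (key a)
      rw [hzre]
      have : Real.pi * ((m:ℝ) + a/2 - a) = Real.pi * m + (-(Real.pi * (a/2))) := by ring
      rw [this, abs_sin_nat_add, Real.sin_neg, abs_neg]
      rw [_root_.abs_of_nonneg (by
        apply Real.sin_nonneg_of_nonneg_of_le_pi
        · positivity
        · have h1 : Real.pi * (a/2) ≤ Real.pi * 1 :=
            mul_le_mul_of_nonneg_left (by linarith) hπ.le
          linarith)]
      exact min_le_left _ _
    have h2 : η ≤ ‖sfac b z‖ := by
      refine le_trans ?_ (key b)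
      rw [hzre]
      have : Real.pi * ((m:ℝ) + a/2 - b) = Real.pi * m + (-(Real.pi * (b - a/2))) := by ring
      rw [this, abs_sin_nat_add, Real.sin_neg, abs_neg]
      rw [_root_.abs_of_nonneg (by
        apply Real.sin_nonneg_of_nonneg_of_le_pi
        · apply mul_nonneg hπ.le
          linarith
        · have h1 : Real.pi * (b - a/2) ≤ Real.pi * 1 :=
            mul_le_mul_of_nonneg_left (by linarith) hπ.le
          linarith)]
      exact min_le_right _ _
    have hprod : ‖Pden a b z‖
        = ‖sfac 0 z‖ * ‖sfac a z‖ * ‖sfac b z‖ := by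
      rw [show Pden a b z = sfac 0 z * sfac a z * sfac b z from rfl, norm_mul, norm_mul]
    have hPlow : η^3 ≤ ‖Pden a b z‖ := by
      rw [hprod]
      calc η^3 = η * η * η := by ring
        _ ≤ _ := mul_le_mul (mul_le_mul h0 h1 hη0.le (norm_nonneg _)) h2 hη0.le
            (mul_nonneg (norm_nonneg _) (norm_nonneg _))
    refine ⟨hPlow, fun hP => ?_⟩
    rw [hP, norm_zero] at hPlow
    have := pow_pos hη0 3
    linarith
  set K₃ : ℝ := C' * Real.exp (2*c₁) / η^3 with hK₃def
  have hK₃0 : 0 < K₃ := by positivity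
  clear_value K₃
  have hB2 : ∀ (m : ℕ) (z : ℂ), z.re = (m:ℝ) + a/2 → |z.im| ≤ 2 →
      ‖F z‖ ≤ K₃ := by
    intro m z hzre hzim
    obtain ⟨hPlow, hPne⟩ := hedge m z hzre
    have hPpos : 0 < ‖Pden a b z‖ := norm_pos_iff.2 hPne
    rw [hFabs z hPne, div_mul_eq_mul_div, div_le_iff₀ hPpos]
    have hm0 : (0:ℝ) ≤ (m:ℝ) := Nat.cast_nonneg m
    have hzre' : -1 ≤ z.re := by rw [hzre]; linarith
    calc ‖f₁ z‖ * Real.exp (-(c₁ * z.re))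
        ≤ (C' * Real.exp (c₁ * (z.re + |z.im|))) * Real.exp (-(c₁ * z.re)) :=
          mul_le_mul_of_nonneg_right (hf₁b z hzre') (Real.exp_pos _).le
      _ = C' * Real.exp (c₁ * |z.im|) := by
          rw [mul_assoc, ← Real.exp_add]
          congr 2
          ring
      _ ≤ C' * Real.exp (2*c₁) := by
          apply mul_le_mul_of_nonneg_left _ hC'0.le
          apply Real.exp_le_exp.2
          nlinarith [abs_nonneg z.im]
      _ = K₃ * η^3 := by
          rw [hK₃def, div_mul_cancel₀ _ (ne_of_gt (pow_pos hη0 3))]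
      _ ≤ K₃ * ‖Pden a b z‖ :=
          mul_le_mul_of_nonneg_left hPlow hK₃0.le
  
  -- left edge bound by compactness
  obtain ⟨K₂, hK₂⟩ : ∃ K₂, ∀ y ∈ Icc (-2:ℝ) 2,
      ‖F (((-(1/2):ℝ):ℂ) + (y:ℂ)*I)‖ ≤ K₂ := by
    have hmapc : Continuous (fun y : ℝ => ((-(1/2):ℝ):ℂ) + (y:ℂ)*I) :=
      continuous_const.add (Complex.continuous_ofReal.mul continuous_const)
    have hcomp : IsCompact ((fun y : ℝ => ((-(1/2):ℝ):ℂ) + (y:ℂ)*I) '' Icc (-2) 2) :=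
      (isCompact_Icc).image hmapc
    have hsub : ((fun y : ℝ => ((-(1/2):ℝ):ℂ) + (y:ℂ)*I) '' Icc (-2) 2) ⊆ V := by
      rintro w ⟨y, _, rfl⟩
      simp only [hVdef, mem_setOf_eq, Complex.add_re, Complex.ofReal_re, Complex.mul_re,
        Complex.ofReal_im, Complex.I_re, Complex.I_im]
      norm_num
    have hFc : ContinuousOn F ((fun y : ℝ => ((-(1/2):ℝ):ℂ) + (y:ℂ)*I) '' Icc (-2) 2) :=
      (hFd.continuousOn).mono hsub
    obtain ⟨K₂, hK₂⟩ := hcomp.exists_bound_of_continuousOn hFc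
    refine ⟨K₂, fun y hy => ?_⟩
    have := hK₂ _ (mem_image_of_mem _ hy)
    exact this
  have hB3 : ∀ z : ℂ, z.re = -(1/2:ℝ) → |z.im| ≤ 2 → ‖F z‖ ≤ K₂ := by
    intro z h1 h2
    have hz : z = ((-(1/2):ℝ):ℂ) + (z.im:ℂ)*I := by
      apply Complex.ext
      · simp [h1]
      · simp
    rw [hz]
    exact hK₂ z.im (abs_le.mp h2)
  -- strip bound by max modulus on rectangles
  set K₄ : ℝ := max K₁ (max (max K₂ 0) K₃) with hK₄def
  have hK₄0 : 0 ≤ K₄ := le_trans hK₁0.le (le_max_left _ _)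
  have hK₁K₄ : K₁ ≤ K₄ := le_max_left _ _
  have hK₂K₄ : K₂ ≤ K₄ := le_trans (le_trans (le_max_left _ _) (le_max_left _ _)) (le_max_right _ _)
  have hK₃K₄ : K₃ ≤ K₄ := le_trans (le_max_right _ _) (le_max_right _ _)
  clear_value K₄
  have hexp_le_one : ∀ u : ℝ, u ≤ 0 → Real.exp u ≤ 1 := by
    intro u hu
    rw [← Real.exp_zero]
    exact Real.exp_le_exp.2 hu
  have hB1' : ∀ w : ℂ, -1 ≤ w.re → 1 ≤ |w.im| → ‖F w‖ ≤ K₁ := by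
    intro w h1 h2
    refine (hB1 w h1 h2).trans ?_
    have h3 : Real.exp (-(μ * |w.im|)) ≤ 1 := hexp_le_one _ (by nlinarith [abs_nonneg w.im])
    nlinarith [hK₁0]
  have hstrip : ∀ z : ℂ, 0 ≤ z.re → |z.im| ≤ 2 → ‖F z‖ ≤ K₄ := by
    intro z hzre hzim
    set m : ℕ := ⌈z.re⌉₊ + 1 with hm
    set T : ℝ := (m:ℝ) + a/2 with hT
    have hzT : z.re < T := by
      have h1 : z.re ≤ (⌈z.re⌉₊:ℝ) := Nat.le_ceil _
      have h2 : ((⌈z.re⌉₊:ℝ)) < (m:ℝ) := by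
        rw [hm]; push_cast; linarith
      rw [hT]; linarith
    have hm1 : (1:ℝ) ≤ (m:ℝ) := by
      rw [hm]; push_cast
      have h0 : (0:ℝ) ≤ (⌈z.re⌉₊:ℝ) := Nat.cast_nonneg _
      linarith
    have hT1 : (1:ℝ) ≤ T := by rw [hT]; linarith
    set R : Set ℂ := Ioo (-(1/2):ℝ) T ×ℂ Ioo (-2:ℝ) 2 with hR
    have hRbounded : Bornology.IsBounded R := by
      apply (Metric.isBounded_closedBall (x := (0:ℂ)) (r := T + 3)).subset
      intro w hw
      rw [hR, mem_reProdIm] at hw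
      rw [Metric.mem_closedBall, Complex.dist_eq, sub_zero]
      have h1 := Complex.norm_le_abs_re_add_abs_im w
      have h2 : |w.re| ≤ T := by
        rcases abs_cases w.re with ⟨h3, _⟩ | ⟨h3, _⟩
        · linarith [hw.1.2]
        · linarith [hw.1.1]
      have h3 : |w.im| ≤ 2 := by
        rcases abs_cases w.im with ⟨h4, _⟩ | ⟨h4, _⟩
        · linarith [hw.2.2]
        · linarith [hw.2.1]
      linarith
    have hneT : (-(1/2):ℝ) ≠ T := by linarith
    have hne2 : (-2:ℝ) ≠ 2 := by norm_num
    have hclosR : closure R = Icc (-(1/2):ℝ) T ×ℂ Icc (-2:ℝ) 2 := by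
      rw [hR, closure_reProdIm, closure_Ioo hneT, closure_Ioo hne2]
    have hsubV : closure R ⊆ V := by
      rw [hclosR]
      intro w hw
      rw [mem_reProdIm] at hw
      have := hw.1.1
      simp only [hVdef, mem_setOf_eq]
      linarith
    have hdR : DiffContOnCl ℂ F R := by
      constructor
      · exact hFd.mono (subset_closure.trans hsubV)
      · exact hFd.continuousOn.mono hsubV
    have hfront : ∀ w ∈ frontier R, ‖F w‖ ≤ K₄ := by
      intro w hw
      rw [hR, frontier_reProdIm, closure_Ioo hneT, closure_Ioo hne2,
        frontier_Ioo (show (-2:ℝ) < 2 by norm_num),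
        frontier_Ioo (show (-(1/2):ℝ) < T by linarith)] at hw
      rcases hw with hw | hw
      · -- top/bottom
        rw [mem_reProdIm] at hw
        have him2 : |w.im| = 2 := by
          have h' : w.im = -2 ∨ w.im = 2 := by simpa using hw.2
          rcases h' with h | h <;> (rw [h]; norm_num)
        have h1 : -1 ≤ w.re := by linarith [hw.1.1]
        exact (hB1' w h1 (by rw [him2]; norm_num)).trans hK₁K₄
      · -- left/right
        rw [mem_reProdIm] at hw
        have him2 : |w.im| ≤ 2 := abs_le.mpr ⟨hw.2.1, hw.2.2⟩
        have h' : w.re = -(1/2) ∨ w.re = T := by simpa using hw.1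
        rcases h' with h | h
        · exact (hB3 w h him2).trans hK₂K₄
        · have : w.re = (m:ℝ) + a/2 := by rw [h, hT]
          exact (hB2 m w this him2).trans hK₃K₄
    have hzclos : z ∈ closure R := by
      rw [hclosR, mem_reProdIm]
      obtain ⟨hu, hv⟩ := abs_le.mp hzim
      exact ⟨⟨by linarith, hzT.le⟩, ⟨hu, hv⟩⟩
    have := Complex.norm_le_of_forall_mem_frontier_norm_le hRbounded hdR hfront hzclos
    exact this
  -- global bound and boundary decay
  have hFb : ∀ z : ℂ, 0 ≤ z.re → ‖F z‖ ≤ K₄ := by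
    intro z hz
    rcases le_or_gt |z.im| 2 with h | h
    · exact hstrip z hz h
    · exact (hB1' z (by linarith) (by linarith)).trans hK₁K₄
  set C₂ : ℝ := max K₁ (K₄ * Real.exp (2*μ)) with hC₂def
  have hC₂0 : 0 ≤ C₂ := le_trans hK₁0.le (le_max_left _ _)
  have hK₁C₂ : K₁ ≤ C₂ := le_max_left _ _
  have hK₄C₂ : K₄ * Real.exp (2*μ) ≤ C₂ := le_max_right _ _
  clear_value C₂
  have hFim : ∀ y : ℝ, ‖F ((y:ℂ)*I)‖ ≤ C₂ * Real.exp (-(μ*|y|)) := by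
    intro y
    have hyre : ((y:ℂ)*I).re = 0 := by simp
    have hyim : ((y:ℂ)*I).im = y := by simp
    rcases le_or_gt 1 |y| with h | h
    · have h1 := hB1 ((y:ℂ)*I) (by rw [hyre]; norm_num) (by rw [hyim]; exact h)
      rw [hyim] at h1
      exact h1.trans (mul_le_mul_of_nonneg_right hK₁C₂ (Real.exp_pos _).le)
    · have h1 := hFb ((y:ℂ)*I) (by rw [hyre])
      have h2 : (1:ℝ) ≤ Real.exp (2*μ + -(μ*|y|)) := by
        rw [← Real.exp_zero]
        apply Real.exp_le_exp.2
        nlinarith [abs_nonneg y]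
      calc ‖F ((y:ℂ)*I)‖ ≤ K₄ := h1
        _ ≤ (K₄ * Real.exp (2*μ)) * Real.exp (-(μ*|y|)) := by
            rw [mul_assoc, ← Real.exp_add]
            nlinarith [hK₄0]
        _ ≤ C₂ * Real.exp (-(μ*|y|)) :=
            mul_le_mul_of_nonneg_right hK₄C₂ (Real.exp_pos _).le
  -- Phase 3 : F vanishes on the closed right half-plane
  have hFzero : Set.EqOn F 0 {z : ℂ | 0 ≤ z.re} :=
    CarlsonAux.final_zero F hFd K₄ C₂ μ hμ hK₄0 hC₂0 hFb hFim
  -- Phase 4 : recover f = 0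
  have hopen : IsOpen {z : ℂ | 0 < z.re} := isOpen_lt continuous_const Complex.continuous_re
  have hfzero_open : Set.EqOn f 0 {z : ℂ | 0 < z.re} := by
    have hfa : AnalyticOnNhd ℂ f {z : ℂ | 0 < z.re} := hdiff.analyticOnNhd hopen
    have hz₀ : (2 + I : ℂ) ∈ {z : ℂ | 0 < z.re} := by
      simp only [mem_setOf_eq, Complex.add_re, Complex.I_re]
      norm_num
    apply hfa.eqOn_zero_of_preconnected_of_eventuallyEq_zero
      (convex_halfSpace_re_gt 0).isPreconnected hz₀
    have hball : Metric.ball (2+I : ℂ) (1/2) ∈ 𝓝 (2+I : ℂ) := Metric.ball_mem_nhds _ (by norm_num)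
    filter_upwards [hball] with w hw
    rw [Metric.mem_ball, Complex.dist_eq] at hw
    have hre : |w.re - 2| < 1/2 := by
      have h1 := Complex.abs_re_le_norm (w - (2+I))
      have h2 : (w - (2+I)).re = w.re - 2 := by
        simp [Complex.sub_re, Complex.add_re]
      rw [h2] at h1
      linarith
    have him : |w.im - 1| < 1/2 := by
      have h1 := Complex.abs_im_le_norm (w - (2+I))
      have h2 : (w - (2+I)).im = w.im - 1 := by
        simp [Complex.sub_im, Complex.add_im]
      rw [h2] at h1
      linarith
    have h1 : (3/2:ℝ) < w.re := by
      rcases abs_cases (w.re - 2) with ⟨h3, _⟩ | ⟨h3, _⟩ <;> linarith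
    have h2 : (1/2:ℝ) < w.im := by
      rcases abs_cases (w.im - 1) with ⟨h3, _⟩ | ⟨h3, _⟩ <;> linarith
    have h3 : 0 ≤ (w - 1).re := by
      simp only [Complex.sub_re, Complex.one_re]
      linarith
    have h4 : Pden a b (w - 1) ≠ 0 := by
      apply Pden_ne_of_im
      simp only [Complex.sub_im, Complex.one_im, sub_zero]
      linarith
    have h5 : F (w - 1) = 0 := hFzero h3
    have h6 : Q (w - 1) = 0 := by
      have h7 : Q (w-1) * Complex.exp (-(c₁:ℂ) * (w-1)) = 0 := h5
      rcases mul_eq_zero.mp h7 with h | h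
      · exact h
      · exact absurd h (Complex.exp_ne_zero _)
    have h7 : f₁ (w-1) = 0 := by
      have h8 : (if Pden a b (w-1) = 0 then deriv f₁ (w-1) / deriv (Pden a b) (w-1)
          else f₁ (w-1) / Pden a b (w-1)) = 0 := h6
      rw [if_neg h4] at h8
      exact (div_eq_zero_iff.mp h8).resolve_right h4
    have h9 : f ((w - 1) + 1) = 0 := h7
    have h10 : (w - 1) + 1 = w := by ring
    rw [h10] at h9
    exact h9
  -- extend to the boundary by continuity
  have hEq : Set.EqOn f 0 {z : ℂ | 0 ≤ z.re} := by
    apply Set.EqOn.of_subset_closure hfzero_open hcont continuousOn_const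
    · intro w hw
      simp only [mem_setOf_eq] at *
      linarith
    · rw [Complex.closure_setOf_lt_re]
  intro z hz
  exact hEq hz
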